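/- There exists an absolute constant C > 0 such that for every real R ≥ 1, every η ∈ (0,1), and every sign s ∈ {+1,−1}, there exist continuously differentiable functions A, B : [1,∞) → ℂ satisfying, for all real r ≥ 1: h_±(r) = A(r)·e^{i r(R+sη)} + B(r)·e^{−i r(R+sη)}, together with the bounds |A(r)|, |B(r)| ≤ C·e^R·r^{−2}·min{1, (η r)^{−2}} and |A′(r)|, |B′(r)| ≤ C·e^R·r^{−3}·min{1, (η r)^{−1}}. -/

import Mathlib

open MeasureTheory

/-- The Selberg transform of the indicator of a hyperbolic ball of radius `ρ` in `ℍ³`,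
as a function of a real spectral parameter `r`. -/
noncomputable def hSel (ρ r : ℝ) : ℝ :=
  (4 * Real.pi / r) * ∫ u in (0:ℝ)..ρ, Real.sin (r * u) * Real.sinh u

/-- The smoothed Selberg transform `h_± = h_{R+sη} · h_η / μ(B_η)`,
where `μ(B_η) = π(sinh(2η) − 2η)`. -/
noncomputable def hPM (R η s r : ℝ) : ℝ :=
  hSel (R + s * η) r * hSel η r / (Real.pi * (Real.sinh (2 * η) - 2 * η))

section Aux
open Real Set


/-- generic FTC inequality helper -/
lemma ftc_nonneg {f f' : ℝ → ℝ} {x : ℝ} (hx : 0 ≤ x)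
    (hd : ∀ t ∈ Set.Icc (0:ℝ) x, HasDerivAt f (f' t) t)
    (hc : ContinuousOn f' (Set.Icc 0 x))
    (hnn : ∀ t ∈ Set.Icc (0:ℝ) x, 0 ≤ f' t) : f 0 ≤ f x := by
  have huIcc : Set.uIcc (0:ℝ) x = Set.Icc 0 x := Set.uIcc_of_le hx
  have h := intervalIntegral.integral_eq_sub_of_hasDerivAt
    (f := f) (f' := f') (a := 0) (b := x) (by rw [huIcc]; exact hd)
    ((hc.mono (by rw [huIcc])).intervalIntegrable)
  have h2 : 0 ≤ ∫ t in (0:ℝ)..x, f' t :=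
    intervalIntegral.integral_nonneg hx (fun u hu => hnn u hu)
  linarith [h ▸ h2]

lemma cosh_one_lt_two : Real.cosh 1 < 2 := by
  rw [Real.cosh_eq]
  have h1 : Real.exp 1 < 2.7182818286 := Real.exp_one_lt_d9
  have h2 : Real.exp (-1) < 1 := Real.exp_lt_one_iff.mpr (by norm_num)
  have h3 : 0 < Real.exp (-1) := Real.exp_pos _
  norm_num
  linarith

lemma my_sinh_le (t : ℝ) (h0 : 0 ≤ t) (h1 : t ≤ 1) : Real.sinh t ≤ 2*t := by
  have := ftc_nonneg (f := fun u => 2*u - Real.sinh u) (f' := fun u => 2 - Real.cosh u)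
    (x := t) h0
    (fun u hu => by
      have h := ((hasDerivAt_id' u).const_mul 2).sub (Real.hasDerivAt_sinh u)
      exact h.congr_deriv (by ring))
    (by fun_prop)
    (fun u hu => by
      have : Real.cosh u ≤ Real.cosh 1 := by
        rw [Real.cosh_le_cosh]
        rw [abs_of_nonneg hu.1, abs_one]; exact hu.2.trans h1
      have := cosh_one_lt_two; simp; linarith)
  simp [Real.sinh_zero] at this
  linarith

lemma my_cosh_le (t : ℝ) (h0 : 0 ≤ t) (h1 : t ≤ 1) : Real.cosh t ≤ 1 + t^2 := by
  have := ftc_nonneg (f := fun u => 1 + u^2 - Real.cosh u) (f' := fun u => 2*u - Real.sinh u)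
    (x := t) h0
    (fun u hu => by
      have h := ((hasDerivAt_const u (1:ℝ)).add (hasDerivAt_pow 2 u)).sub
          (Real.hasDerivAt_cosh u)
      norm_num at h
      exact h)
    (by fun_prop)
    (fun u hu => by have := my_sinh_le u hu.1 (hu.2.trans h1); simp; linarith)
  simp [Real.cosh_zero] at this
  linarith

lemma my_tcosh (t : ℝ) (h0 : 0 ≤ t) (h1 : t ≤ 1) :
    0 ≤ t * Real.cosh t - Real.sinh t ∧ t * Real.cosh t - Real.sinh t ≤ 2/3 * t^3 := by
  constructor
  · have := ftc_nonneg (f := fun u => u * Real.cosh u - Real.sinh u)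
      (f' := fun u => u * Real.sinh u) (x := t) h0
      (fun u hu => by
        have h := ((hasDerivAt_id' u).mul (Real.hasDerivAt_cosh u)).sub (Real.hasDerivAt_sinh u)
        exact h.congr_deriv (by ring))
      (by fun_prop)
      (fun u hu => mul_nonneg hu.1 ((Real.sinh_nonneg_iff.mpr hu.1)))
    simpa using this
  · have := ftc_nonneg (f := fun u => 2/3 * u^3 - (u * Real.cosh u - Real.sinh u))
      (f' := fun u => u * (2*u - Real.sinh u)) (x := t) h0
      (fun u hu => by
        have h := (((hasDerivAt_pow 3 u).const_mul (2/3:ℝ)).sub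
          (((hasDerivAt_id' u).mul (Real.hasDerivAt_cosh u)).sub (Real.hasDerivAt_sinh u)))
        exact h.congr_deriv (by push_cast; ring))
      (by fun_prop)
      (fun u hu => mul_nonneg hu.1 (by linarith [my_sinh_le u hu.1 (hu.2.trans h1)]))
    simp at this
    linarith

lemma my_cosh_ge (t : ℝ) (h0 : 0 ≤ t) : 1 + t^2/2 ≤ Real.cosh t := by
  have := ftc_nonneg (f := fun u => Real.cosh u - (1 + u^2/2))
    (f' := fun u => Real.sinh u - u) (x := t) h0
    (fun u hu => by
      have h := (Real.hasDerivAt_cosh u).sub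
        ((hasDerivAt_const u (1:ℝ)).add ((hasDerivAt_pow 2 u).div_const 2))
      exact h.congr_deriv (by push_cast; ring))
    (by fun_prop)
    (fun u hu => by simp only [sub_nonneg]; linarith [Real.self_le_sinh_iff.mpr hu.1])
  simp at this
  linarith

lemma my_sinh_cube (t : ℝ) (h0 : 0 ≤ t) : t + t^3/6 ≤ Real.sinh t := by
  have := ftc_nonneg (f := fun u => Real.sinh u - (u + u^3/6))
    (f' := fun u => Real.cosh u - (1 + u^2/2)) (x := t) h0
    (fun u hu => by
      have h := (Real.hasDerivAt_sinh u).sub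
        ((hasDerivAt_id u).add ((hasDerivAt_pow 3 u).div_const 6))
      exact h.congr_deriv (by push_cast; ring))
    (by fun_prop)
    (fun u hu => by simp only [sub_nonneg]; linarith [my_cosh_ge u hu.1])
  simp at this
  linarith

lemma my_sin_ge (x : ℝ) (h0 : 0 ≤ x) : x - x^3 ≤ Real.sin x := by
  have := ftc_nonneg (f := fun u => Real.sin u - (u - u^3))
    (f' := fun u => Real.cos u - (1 - 3*u^2)) (x := x) h0
    (fun u hu => by
      have h := (Real.hasDerivAt_sin u).sub
        ((hasDerivAt_id u).sub (hasDerivAt_pow 3 u))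
      exact h.congr_deriv (by push_cast; ring))
    (by fun_prop)
    (fun u hu => by
      have := Real.one_sub_sq_div_two_le_cos (x := u)
      nlinarith [sq_nonneg u])
  simp at this
  linarith

lemma integral_sin_sinh (ρ r : ℝ) :
    ∫ u in (0:ℝ)..ρ, Real.sin (r*u) * Real.sinh u
      = (Real.sin (r*ρ) * Real.cosh ρ - r * Real.cos (r*ρ) * Real.sinh ρ)/(1+r^2) := by
  have h12 : (1 : ℝ) + r^2 ≠ 0 := by positivity
  have h := intervalIntegral.integral_eq_sub_of_hasDerivAt
    (f := fun u => (Real.sin (r*u) * Real.cosh u - r * Real.cos (r*u) * Real.sinh u)/(1+r^2))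
    (f' := fun u => Real.sin (r*u) * Real.sinh u) (a := 0) (b := ρ)
    (fun u hu => by
      have hs : HasDerivAt (fun u : ℝ => Real.sin (r*u)) (r * Real.cos (r*u)) u := by
        have := (Real.hasDerivAt_sin (r*u)).comp u ((hasDerivAt_id' u).const_mul r)
        exact this.congr_deriv (by ring)
      have hc : HasDerivAt (fun u : ℝ => Real.cos (r*u)) (-(r * Real.sin (r*u))) u := by
        have := (Real.hasDerivAt_cos (r*u)).comp u ((hasDerivAt_id' u).const_mul r)
        exact this.congr_deriv (by ring)
      have h := (((hs.mul (Real.hasDerivAt_cosh u)).sub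
        ((hc.const_mul r).mul (Real.hasDerivAt_sinh u))).div_const (1+r^2))
      exact h.congr_deriv (by field_simp; ring))
    (by apply ContinuousOn.intervalIntegrable; fun_prop)
  simpa using h

noncomputable def KK (ρ r : ℝ) : ℝ :=
  Real.sin (r*ρ) * Real.cosh ρ - r * Real.cos (r*ρ) * Real.sinh ρ

noncomputable def KK' (η r : ℝ) : ℝ :=
  η * Real.cos (r*η) * Real.cosh η - Real.cos (r*η) * Real.sinh η
    + r*η*Real.sin (r*η)*Real.sinh η

lemma KK_hasDerivAt (η r : ℝ) : HasDerivAt (fun r => KK η r) (KK' η r) r := by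
  have hs : HasDerivAt (fun r : ℝ => Real.sin (r*η)) (η * Real.cos (r*η)) r := by
    have := (Real.hasDerivAt_sin (r*η)).comp r ((hasDerivAt_id' r).mul_const η)
    exact this.congr_deriv (by ring)
  have hc : HasDerivAt (fun r : ℝ => Real.cos (r*η)) (-(η * Real.sin (r*η))) r := by
    have := (Real.hasDerivAt_cos (r*η)).comp r ((hasDerivAt_id r).mul_const η)
    simp only [id_eq, one_mul] at this
    exact this.congr_deriv (by ring)
  have h := (hs.mul_const (Real.cosh η)).sub
    (((hasDerivAt_id r).mul hc).mul_const (Real.sinh η))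
  exact h.congr_deriv (by unfold KK'; simp only [id_eq]; ring)

lemma KK_bound1 {η r : ℝ} (hη0 : 0 < η) (hη1 : η ≤ 1) (hr : 0 ≤ r) :
    |KK η r| ≤ 2*(1+r*η) := by
  have hch : Real.cosh η ≤ 2 := by nlinarith [my_cosh_le η hη0.le hη1]
  have hch0 : (1:ℝ) ≤ Real.cosh η := Real.one_le_cosh η
  have hsh : Real.sinh η ≤ 2*η := my_sinh_le η hη0.le hη1
  have hsh0 : 0 ≤ Real.sinh η := Real.sinh_nonneg_iff.mpr hη0.le
  have hs := Real.abs_sin_le_one (r*η)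
  have hc := Real.abs_cos_le_one (r*η)
  rw [abs_le] at hs hc
  rw [abs_le]
  unfold KK
  constructor <;>
    nlinarith [mul_nonneg hr hsh0, mul_nonneg (mul_nonneg hr hsh0) (sub_nonneg.mpr hc.2),
      mul_nonneg (mul_nonneg hr hsh0) (by linarith : (0:ℝ) ≤ 1 + Real.cos (r*η)),
      mul_nonneg (sub_nonneg.mpr hs.2) (by linarith : (0:ℝ) ≤ Real.cosh η),
      mul_nonneg (by linarith : (0:ℝ) ≤ 1 + Real.sin (r*η)) (by linarith : (0:ℝ) ≤ Real.cosh η)]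

lemma KK_bound2 {η r : ℝ} (hη0 : 0 < η) (hη1 : η ≤ 1) (hr : 0 ≤ r) :
    |KK η r| ≤ 2*r*η^3*(1+r^2) := by
  have hx0 : 0 ≤ r*η := mul_nonneg hr hη0.le
  have hch1 : Real.cosh η ≤ 1+η^2 := my_cosh_le η hη0.le hη1
  have hch0 : (1:ℝ) ≤ Real.cosh η := Real.one_le_cosh η
  have hsh1 : Real.sinh η ≤ 2*η := my_sinh_le η hη0.le hη1
  have hsh2 : η ≤ Real.sinh η := Real.self_le_sinh_iff.mpr hη0.le
  have hsh3 : Real.sinh η ≤ η * Real.cosh η := by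
    have := (my_tcosh η hη0.le hη1).1; linarith
  have hsh0 : 0 ≤ Real.sinh η := le_trans hη0.le hsh2
  have hs1 : Real.sin (r*η) ≤ r*η := by
    rcases eq_or_lt_of_le hx0 with h | h
    · simp [← h]
    · exact (Real.sin_lt h).le
  have hs2 : r*η - (r*η)^3 ≤ Real.sin (r*η) := my_sin_ge _ hx0
  have hc1 : Real.cos (r*η) ≤ 1 := Real.cos_le_one _
  have hc2 : 1 - (r*η)^2/2 ≤ Real.cos (r*η) := Real.one_sub_sq_div_two_le_cos
  have hη2 : (0:ℝ) ≤ 1 - η^2 := by nlinarith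
  have p1 : r*η - (r*η)^3 - (r*η)^3*η^2 ≤ Real.sin (r*η) * Real.cosh η := by
    nlinarith [mul_nonneg (sub_nonneg.mpr hs2) (by linarith : (0:ℝ) ≤ Real.cosh η),
      mul_nonneg hx0 (sub_nonneg.mpr hch0),
      mul_nonneg (pow_nonneg hx0 3) (sub_nonneg.mpr hch1)]
  have p2 : r*Real.cos (r*η)*Real.sinh η ≤ r*η + r*η^3 := by
    nlinarith [mul_nonneg (mul_nonneg hr hsh0) (sub_nonneg.mpr hc1),
      mul_nonneg hr (sub_nonneg.mpr hsh3),
      mul_nonneg (mul_nonneg hr hη0.le) (sub_nonneg.mpr hch1)]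
  have p3 : Real.sin (r*η) * Real.cosh η ≤ r*η + r*η^3 := by
    nlinarith [mul_nonneg (sub_nonneg.mpr hs1) (by linarith : (0:ℝ) ≤ Real.cosh η),
      mul_nonneg hx0 (sub_nonneg.mpr hch1)]
  have p4 : r*η - r^3*η^3 ≤ r*Real.cos (r*η)*Real.sinh η := by
    nlinarith [mul_nonneg (mul_nonneg hr hsh0) (sub_nonneg.mpr hc2),
      mul_nonneg hr (sub_nonneg.mpr hsh2),
      mul_nonneg (mul_nonneg hr (sq_nonneg (r*η))) (sub_nonneg.mpr hsh1)]
  rw [abs_le]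
  unfold KK
  constructor
  · nlinarith [mul_nonneg (mul_nonneg (pow_nonneg hr 3) (pow_nonneg hη0.le 3)) hη2]
  · nlinarith []

lemma KK'_bound {η r : ℝ} (hη0 : 0 < η) (hη1 : η ≤ 1) (hr : 0 ≤ r) :
    |KK' η r| ≤ 2*η*(2+r*η) := by
  have hch : Real.cosh η ≤ 2 := by nlinarith [my_cosh_le η hη0.le hη1]
  have hch0 : (1:ℝ) ≤ Real.cosh η := Real.one_le_cosh η
  have hsh : Real.sinh η ≤ 2*η := my_sinh_le η hη0.le hη1
  have hsh0 : 0 ≤ Real.sinh η := Real.sinh_nonneg_iff.mpr hη0.le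
  have hs := Real.abs_sin_le_one (r*η)
  have hc := Real.abs_cos_le_one (r*η)
  rw [abs_le] at hs hc
  rw [abs_le]
  unfold KK'
  have hch0' : (0:ℝ) ≤ Real.cosh η := by linarith
  constructor <;>
    nlinarith [mul_nonneg (mul_nonneg hη0.le (sub_nonneg.mpr hc.2)) hch0',
      mul_nonneg (mul_nonneg hη0.le (by linarith : (0:ℝ) ≤ 1 + Real.cos (r*η))) hch0',
      mul_nonneg hη0.le (by linarith : (0:ℝ) ≤ 2 - Real.cosh η),
      mul_nonneg (sub_nonneg.mpr hc.2) hsh0,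
      mul_nonneg (by linarith : (0:ℝ) ≤ 1 + Real.cos (r*η)) hsh0,
      mul_nonneg (mul_nonneg (mul_nonneg hr hη0.le) (sub_nonneg.mpr hs.2)) hsh0,
      mul_nonneg (mul_nonneg (mul_nonneg hr hη0.le) (by linarith : (0:ℝ) ≤ 1 + Real.sin (r*η))) hsh0,
      mul_nonneg (mul_nonneg hr hη0.le) (by linarith : (0:ℝ) ≤ 2*η - Real.sinh η)]

lemma D_bound {η r : ℝ} (hη0 : 0 < η) (hη1 : η ≤ 1) (hr : 0 ≤ r) :
    |(1+r^2) * KK' η r - 2*r*KK η r| ≤ 7*η^3*(1+r^2)^2 := by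
  have htc := my_tcosh η hη0.le hη1
  have hsh : Real.sinh η ≤ 2*η := my_sinh_le η hη0.le hη1
  have hsh0 : 0 ≤ Real.sinh η := Real.sinh_nonneg_iff.mpr hη0.le
  have hc := Real.abs_cos_le_one (r*η)
  have hs : |Real.sin (r*η)| ≤ r*η := by
    have := Real.abs_sin_le_abs (x := r*η)
    rwa [abs_of_nonneg (mul_nonneg hr hη0.le)] at this
  have hid : (1+r^2) * KK' η r - 2*r*KK η r
      = (1+r^2) * Real.cos (r*η) * (η*Real.cosh η - Real.sinh η)
        + (1+r^2) * ((r*η) * Real.sin (r*η) * Real.sinh η)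
        - 2*r*KK η r := by
    unfold KK KK'; ring
  have h1 : |(1+r^2) * Real.cos (r*η) * (η*Real.cosh η - Real.sinh η)|
      ≤ (1+r^2) * (2/3*η^3) := by
    rw [abs_mul, abs_mul, abs_of_nonneg (by positivity : (0:ℝ) ≤ 1+r^2),
      abs_of_nonneg htc.1]
    nlinarith [mul_nonneg (mul_nonneg (by positivity : (0:ℝ) ≤ 1+r^2)
        (sub_nonneg.mpr hc)) htc.1,
      mul_nonneg (by positivity : (0:ℝ) ≤ 1+r^2) (by linarith [htc.2] :
        (0:ℝ) ≤ 2/3*η^3 - (η*Real.cosh η - Real.sinh η))]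
  have h2 : |(1+r^2) * ((r*η) * Real.sin (r*η) * Real.sinh η)|
      ≤ (1+r^2) * (2*r^2*η^3) := by
    rw [abs_mul, abs_of_nonneg (by positivity : (0:ℝ) ≤ 1+r^2)]
    have : |(r*η) * Real.sin (r*η) * Real.sinh η| ≤ 2*r^2*η^3 := by
      rw [abs_mul, abs_mul, abs_of_nonneg (mul_nonneg hr hη0.le), abs_of_nonneg hsh0]
      nlinarith [mul_nonneg (mul_nonneg (mul_nonneg hr hη0.le)
          (sub_nonneg.mpr hs)) hsh0,
        mul_nonneg (mul_nonneg (mul_nonneg (mul_nonneg hr hη0.le) hr) hη0.le)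
          (by linarith : (0:ℝ) ≤ 2*η - Real.sinh η)]
    nlinarith [this, abs_nonneg ((r*η) * Real.sin (r*η) * Real.sinh η),
      sq_nonneg r]
  have h3 : |2*r*KK η r| ≤ 2*r*(2*r*η^3*(1+r^2)) := by
    rw [abs_mul, abs_of_nonneg (by positivity : (0:ℝ) ≤ 2*r)]
    exact mul_le_mul_of_nonneg_left (KK_bound2 hη0 hη1 hr) (by positivity)
  calc |(1+r^2) * KK' η r - 2*r*KK η r|
      ≤ |(1+r^2) * Real.cos (r*η) * (η*Real.cosh η - Real.sinh η)
          + (1+r^2) * ((r*η) * Real.sin (r*η) * Real.sinh η)| + |2*r*KK η r| := by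
        rw [hid]; exact abs_sub _ _
    _ ≤ |(1+r^2) * Real.cos (r*η) * (η*Real.cosh η - Real.sinh η)|
          + |(1+r^2) * ((r*η) * Real.sin (r*η) * Real.sinh η)| + |2*r*KK η r| := by
        gcongr; exact abs_add_le _ _
    _ ≤ 7*η^3*(1+r^2)^2 := by nlinarith [h1, h2, h3, sq_nonneg r, pow_nonneg hη0.le 3, sq_nonneg (r*r), mul_nonneg (pow_nonneg hη0.le 3) (sq_nonneg r)]

lemma mu_lb {η : ℝ} (hη0 : 0 < η) :
    4*Real.pi/3*η^3 ≤ Real.pi * (Real.sinh (2*η) - 2*η) := by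
  have h := my_sinh_cube (2*η) (by linarith)
  have hπ := Real.pi_pos
  nlinarith

lemma mu_pos {η : ℝ} (hη0 : 0 < η) : 0 < Real.pi * (Real.sinh (2*η) - 2*η) := by
  have := mu_lb hη0
  have hπ := Real.pi_pos
  nlinarith [pow_pos hη0 3]

noncomputable def phi (η r : ℝ) : ℝ :=
  16*Real.pi^2/(Real.pi*(Real.sinh (2*η)-2*η)) * KK η r / (r^2*(1+r^2)^2)

noncomputable def phi' (η r : ℝ) : ℝ :=
  (16*Real.pi^2/(Real.pi*(Real.sinh (2*η)-2*η)) * KK' η r * (r^2*(1+r^2)^2)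
    - 16*Real.pi^2/(Real.pi*(Real.sinh (2*η)-2*η)) * KK η r
        * (2*r*(1+r^2)^2 + r^2*(2*(1+r^2)*(2*r)))) / (r^2*(1+r^2)^2)^2

lemma phi_hasDerivAt {η r : ℝ} (hr : r ≠ 0) :
    HasDerivAt (fun r => phi η r) (phi' η r) r := by
  have hden : HasDerivAt (fun r : ℝ => r^2*(1+r^2)^2)
      (2*r*(1+r^2)^2 + r^2*(2*(1+r^2)*(2*r))) r := by
    have h1 : HasDerivAt (fun r : ℝ => 1+r^2) (2*r) r := by
      have := (hasDerivAt_const r (1:ℝ)).add (hasDerivAt_pow 2 r)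
      exact this.congr_deriv (by push_cast; ring)
    have h2 : HasDerivAt (fun r : ℝ => (1+r^2)^2) (2*(1+r^2)*(2*r)) r := by
      have := h1.pow 2
      exact this.congr_deriv (by push_cast; ring)
    have h3 : HasDerivAt (fun r : ℝ => r^2) (2*r) r := by
      have := hasDerivAt_pow 2 r
      exact this.congr_deriv (by push_cast; ring)
    exact (h3.mul h2).congr_deriv (by ring)
  have hnum : HasDerivAt (fun r => 16*Real.pi^2/(Real.pi*(Real.sinh (2*η)-2*η)) * KK η r)
      (16*Real.pi^2/(Real.pi*(Real.sinh (2*η)-2*η)) * KK' η r) r :=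
    (KK_hasDerivAt η r).const_mul _
  have hdz : r^2*(1+r^2)^2 ≠ 0 := by positivity
  exact (hnum.div hden hdz).congr_deriv (by unfold phi'; ring)

lemma phi_bound {η r : ℝ} (hη0 : 0 < η) (hη1 : η ≤ 1) (hr : 1 ≤ r) :
    |phi η r| ≤ 48*Real.pi * min 1 (1/(η*r)^2) / r^3 := by
  have hr0 : (0:ℝ) < r := lt_of_lt_of_le one_pos hr
  have hμ : 0 < Real.pi*(Real.sinh (2*η)-2*η) := mu_pos hη0
  have hμ3 : 4*Real.pi/3*η^3 ≤ Real.pi*(Real.sinh (2*η)-2*η) := mu_lb hη0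
  have hπ := Real.pi_pos
  have hden : (0:ℝ) < r^2*(1+r^2)^2 := by positivity
  have heq : phi η r = 16*Real.pi^2 * KK η r
      / ((Real.pi*(Real.sinh (2*η)-2*η)) * (r^2*(1+r^2)^2)) := by
    unfold phi
    rw [div_mul_eq_mul_div, div_div]
  rw [heq, abs_div, abs_mul,
    abs_of_nonneg (by positivity : (0:ℝ) ≤ 16*Real.pi^2),
    abs_of_nonneg (le_of_lt (mul_pos hμ hden))]
  rw [div_le_div_iff₀ (mul_pos hμ hden) (by positivity)]
  rcases le_total (η*r) 1 with hx | hx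
  · rw [min_eq_left (by
      rw [le_div_iff₀ (by positivity)]
      nlinarith [mul_nonneg hη0.le hr0.le])]
    have hKK := KK_bound2 hη0 hη1 hr0.le
    have step1 : 16*Real.pi^2 * |KK η r| * r^3
        ≤ 16*Real.pi^2 * (2*r*η^3*(1+r^2)) * r^3 := by gcongr
    have step2 : 16*Real.pi^2 * (2*r*η^3*(1+r^2)) * r^3
        ≤ 48*Real.pi*(4*Real.pi/3*η^3)*(r^2*(1+r^2)^2) := by
      have hpoly : 2*(r^4*(1+r^2)) ≤ 4*(r^2*(1+r^2)^2) := by nlinarith [sq_nonneg r]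
      nlinarith [mul_le_mul_of_nonneg_left hpoly
        (by positivity : (0:ℝ) ≤ 16*Real.pi^2*η^3)]
    have step3 : 48*Real.pi*(4*Real.pi/3*η^3)*(r^2*(1+r^2)^2)
        ≤ 48*Real.pi*1*((Real.pi*(Real.sinh (2*η)-2*η)) * (r^2*(1+r^2)^2)) := by
      have h2 := mul_le_mul_of_nonneg_left
        (mul_le_mul_of_nonneg_right hμ3 hden.le) (by positivity : (0:ℝ) ≤ 48*Real.pi)
      linarith [h2]
    linarith
  · have hx2 : 1/(η*r)^2 ≤ 1 := by
      rw [div_le_one (by positivity)]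
      nlinarith
    rw [min_eq_right hx2]
    have hKK1 := KK_bound1 hη0 hη1 hr0.le
    have hKK : |KK η r| ≤ 4*(r*η) := by nlinarith
    rw [show 48*Real.pi*(1/(η*r)^2)*((Real.pi*(Real.sinh (2*η)-2*η)) * (r^2*(1+r^2)^2))
        = 48*Real.pi*((Real.pi*(Real.sinh (2*η)-2*η)) * (r^2*(1+r^2)^2))/(η*r)^2 from by ring,
      le_div_iff₀ (by positivity)]
    have step1 : 16*Real.pi^2 * |KK η r| * r^3 * (η*r)^2
        ≤ 16*Real.pi^2 * (4*(r*η)) * r^3 * (η*r)^2 := by gcongr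
    have step2 : 16*Real.pi^2 * (4*(r*η)) * r^3 * (η*r)^2
        ≤ 48*Real.pi*(4*Real.pi/3*η^3)*(r^2*(1+r^2)^2) := by
      have hpoly : (r^6:ℝ) ≤ r^2*(1+r^2)^2 := by nlinarith [sq_nonneg r, pow_pos hr0 2]
      nlinarith [mul_le_mul_of_nonneg_left hpoly
        (by positivity : (0:ℝ) ≤ 64*Real.pi^2*η^3)]
    have step3 : 48*Real.pi*(4*Real.pi/3*η^3)*(r^2*(1+r^2)^2)
        ≤ 48*Real.pi*((Real.pi*(Real.sinh (2*η)-2*η)) * (r^2*(1+r^2)^2)) := by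
      have h2 := mul_le_mul_of_nonneg_left
        (mul_le_mul_of_nonneg_right hμ3 hden.le) (by positivity : (0:ℝ) ≤ 48*Real.pi)
      linarith [h2]
    linarith

lemma boost1 {η r : ℝ} (hη : 0 ≤ η) (hr : 0 ≤ r) (hx : 1 ≤ η*r) (c : ℝ) (hc : 0 ≤ c)
    (k : ℕ) : c*(η^2*r^k) ≤ c*(η^3*r^(k+1)) := by
  have h2 : c*(η^2*r^k)*1 ≤ c*(η^2*r^k)*(η*r) :=
    mul_le_mul_of_nonneg_left hx (by positivity)
  calc c*(η^2*r^k) = c*(η^2*r^k)*1 := by ring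
    _ ≤ c*(η^2*r^k)*(η*r) := h2
    _ = c*(η^3*r^(k+1)) := by ring

lemma boost2 {η r : ℝ} (hη : 0 ≤ η) (hr : 0 ≤ r) (hx : 1 ≤ η*r) (c : ℝ) (hc : 0 ≤ c)
    (k : ℕ) : c*(η*r^k) ≤ c*(η^3*r^(k+2)) := by
  have h1 : (1:ℝ) ≤ (η*r)^2 := one_le_pow₀ hx
  have h2 : c*(η*r^k)*1 ≤ c*(η*r^k)*(η*r)^2 :=
    mul_le_mul_of_nonneg_left h1 (by positivity)
  calc c*(η*r^k) = c*(η*r^k)*1 := by ring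
    _ ≤ c*(η*r^k)*(η*r)^2 := h2
    _ = c*(η^3*r^(k+2)) := by ring

set_option maxHeartbeats 1000000 in
lemma phi'_bound {η r : ℝ} (hη0 : 0 < η) (hη1 : η ≤ 1) (hr : 1 ≤ r) :
    |phi' η r| ≤ 800*Real.pi * min 1 (1/(η*r)) / r^4 := by
  have hr0 : (0:ℝ) < r := lt_of_lt_of_le one_pos hr
  have hμ : 0 < Real.pi*(Real.sinh (2*η)-2*η) := mu_pos hη0
  have hμ3 : 4*Real.pi/3*η^3 ≤ Real.pi*(Real.sinh (2*η)-2*η) := mu_lb hη0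
  have hπ := Real.pi_pos
  have hden : (0:ℝ) < r^3*(1+r^2)^3 := by positivity
  have heq : phi' η r = 16*Real.pi^2
      * (r*((1+r^2)*KK' η r - 2*r*KK η r) - (2+4*r^2)*KK η r)
      / ((Real.pi*(Real.sinh (2*η)-2*η)) * (r^3*(1+r^2)^3)) := by
    unfold phi'
    have hs2 : Real.sinh (2*η) - 2*η ≠ 0 := by
      intro h; rw [h, mul_zero] at hμ; exact lt_irrefl _ hμ
    rw [div_eq_div_iff (by positivity) (by positivity)]
    field_simp
    ring
  rw [heq, abs_div, abs_mul,
    abs_of_nonneg (by positivity : (0:ℝ) ≤ 16*Real.pi^2),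
    abs_of_nonneg (le_of_lt (mul_pos hμ hden))]
  rw [div_le_div_iff₀ (mul_pos hμ hden) (by positivity)]
  have htri : |r*((1+r^2)*KK' η r - 2*r*KK η r) - (2+4*r^2)*KK η r|
      ≤ r * |(1+r^2)*KK' η r - 2*r*KK η r| + (2+4*r^2) * |KK η r| := by
    calc |r*((1+r^2)*KK' η r - 2*r*KK η r) - (2+4*r^2)*KK η r|
        ≤ |r*((1+r^2)*KK' η r - 2*r*KK η r)| + |(2+4*r^2)*KK η r| := abs_sub _ _
      _ = r * |(1+r^2)*KK' η r - 2*r*KK η r| + (2+4*r^2) * |KK η r| := by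
          rw [abs_mul, abs_mul, abs_of_nonneg hr0.le,
            abs_of_nonneg (by positivity : (0:ℝ) ≤ 2+4*r^2)]
  rcases le_total (η*r) 1 with hx | hx
  · rw [min_eq_left (by
      rw [le_div_iff₀ (by positivity)]
      nlinarith [mul_nonneg hη0.le hr0.le])]
    have hD := D_bound hη0 hη1 hr0.le
    have hKK := KK_bound2 hη0 hη1 hr0.le
    have hF : |r*((1+r^2)*KK' η r - 2*r*KK η r) - (2+4*r^2)*KK η r|
        ≤ 15*r*η^3*(1+r^2)^2 := by
      have e1 : r * |(1+r^2)*KK' η r - 2*r*KK η r| ≤ r * (7*η^3*(1+r^2)^2) :=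
        mul_le_mul_of_nonneg_left hD hr0.le
      have e2 : (2+4*r^2) * |KK η r| ≤ (2+4*r^2) * (2*r*η^3*(1+r^2)) :=
        mul_le_mul_of_nonneg_left hKK (by positivity)
      nlinarith [htri, mul_nonneg (pow_nonneg hη0.le 3) hr0.le,
        mul_nonneg (pow_nonneg hη0.le 3) (pow_nonneg hr0.le 3)]
    have step1 : 16*Real.pi^2 * |r*((1+r^2)*KK' η r - 2*r*KK η r) - (2+4*r^2)*KK η r| * r^4
        ≤ 16*Real.pi^2 * (15*r*η^3*(1+r^2)^2) * r^4 := by gcongr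
    have step2 : 16*Real.pi^2 * (15*r*η^3*(1+r^2)^2) * r^4
        ≤ 800*Real.pi*(4*Real.pi/3*η^3)*(r^3*(1+r^2)^3) := by
      have hpoly : 240*(r^5*(1+r^2)^2) ≤ 1000*(r^3*(1+r^2)^3) := by
        have h1 : r^2 ≤ 1+r^2 := by linarith
        have h2 := mul_le_mul_of_nonneg_left h1
          (by positivity : (0:ℝ) ≤ 240*(r^3*(1+r^2)^2))
        nlinarith [h2, mul_pos (pow_pos hr0 3)
          (pow_pos (by positivity : (0:ℝ) < 1+r^2) 3)]
      nlinarith [mul_le_mul_of_nonneg_left hpoly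
        (by positivity : (0:ℝ) ≤ Real.pi^2*η^3)]
    have step3 : 800*Real.pi*(4*Real.pi/3*η^3)*(r^3*(1+r^2)^3)
        ≤ 800*Real.pi*1*((Real.pi*(Real.sinh (2*η)-2*η)) * (r^3*(1+r^2)^3)) := by
      have h2 := mul_le_mul_of_nonneg_left
        (mul_le_mul_of_nonneg_right hμ3 hden.le) (by positivity : (0:ℝ) ≤ 800*Real.pi)
      linarith [h2]
    linarith
  · have hx2 : 1/(η*r) ≤ 1 := by
      rw [div_le_one (by positivity)]; exact hx
    rw [min_eq_right hx2]
    have hKK1 := KK_bound1 hη0 hη1 hr0.le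
    have hKK' := KK'_bound hη0 hη1 hr0.le
    have hD : |(1+r^2)*KK' η r - 2*r*KK η r|
        ≤ (1+r^2)*(2*η*(2+r*η)) + 2*r*(2*(1+r*η)) := by
      calc |(1+r^2)*KK' η r - 2*r*KK η r|
          ≤ |(1+r^2)*KK' η r| + |2*r*KK η r| := abs_sub _ _
        _ = (1+r^2)*|KK' η r| + 2*r*|KK η r| := by
            rw [abs_mul, abs_mul, abs_of_nonneg (by positivity : (0:ℝ) ≤ 1+r^2),
              abs_of_nonneg (by positivity : (0:ℝ) ≤ 2*r)]
        _ ≤ (1+r^2)*(2*η*(2+r*η)) + 2*r*(2*(1+r*η)) :=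
            add_le_add (mul_le_mul_of_nonneg_left hKK' (by positivity))
              (mul_le_mul_of_nonneg_left hKK1 (by positivity))
    have hF : |r*((1+r^2)*KK' η r - 2*r*KK η r) - (2+4*r^2)*KK η r|
        ≤ r*((1+r^2)*(2*η*(2+r*η)) + 2*r*(2*(1+r*η))) + (2+4*r^2)*(2*(1+r*η)) := by
      have e1 : r * |(1+r^2)*KK' η r - 2*r*KK η r|
          ≤ r * ((1+r^2)*(2*η*(2+r*η)) + 2*r*(2*(1+r*η))) :=
        mul_le_mul_of_nonneg_left hD hr0.le
      have e2 : (2+4*r^2) * |KK η r| ≤ (2+4*r^2) * (2*(1+r*η)) :=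
        mul_le_mul_of_nonneg_left hKK1 (by positivity)
      linarith
    rw [show 800*Real.pi*(1/(η*r))*((Real.pi*(Real.sinh (2*η)-2*η)) * (r^3*(1+r^2)^3))
        = 800*Real.pi*((Real.pi*(Real.sinh (2*η)-2*η)) * (r^3*(1+r^2)^3))/(η*r) from by ring,
      le_div_iff₀ (by positivity)]
    have step1 : 16*Real.pi^2 * |r*((1+r^2)*KK' η r - 2*r*KK η r) - (2+4*r^2)*KK η r|
          * r^4 * (η*r)
        ≤ 16*Real.pi^2 * (r*((1+r^2)*(2*η*(2+r*η)) + 2*r*(2*(1+r*η)))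
            + (2+4*r^2)*(2*(1+r*η))) * r^4 * (η*r) := by gcongr
    have hpoly : (r*((1+r^2)*(2*η*(2+r*η)) + 2*r*(2*(1+r*η))) + (2+4*r^2)*(2*(1+r*η)))
          * (η*r^5) ≤ 44*(η^3*r^9) := by
      have hx2b : (1:ℝ) ≤ (η*r)^2 := one_le_pow₀ hx
      have d1 : 4*(η*r^5) ≤ 4*(η^3*r^7) := by
        nlinarith [mul_le_mul_of_nonneg_left hx2b (by positivity : (0:ℝ) ≤ 4*(η*r^5))]
      have d2 : 12*(η*r^7) ≤ 12*(η^3*r^9) := by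
        nlinarith [mul_le_mul_of_nonneg_left hx2b (by positivity : (0:ℝ) ≤ 12*(η*r^7))]
      have d3 : 8*(η^2*r^6) ≤ 8*(η^3*r^7) := by
        nlinarith [mul_le_mul_of_nonneg_left hx (by positivity : (0:ℝ) ≤ 8*(η^2*r^6))]
      have d4 : 16*(η^2*r^8) ≤ 16*(η^3*r^9) := by
        nlinarith [mul_le_mul_of_nonneg_left hx (by positivity : (0:ℝ) ≤ 16*(η^2*r^8))]
      have hr79 : r^7 ≤ r^9 := pow_le_pow_right₀ hr (by norm_num)
      have e5 : 12*(η^3*r^7) ≤ 12*(η^3*r^9) := by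
        nlinarith [mul_le_mul_of_nonneg_left hr79 (by positivity : (0:ℝ) ≤ 12*η^3)]
      have e6 : 2*(η^3*r^7) ≤ 2*(η^3*r^9) := by
        nlinarith [mul_le_mul_of_nonneg_left hr79 (by positivity : (0:ℝ) ≤ 2*η^3)]
      nlinarith [d1, d2, d3, d4, e5, e6]
    have step2 : 16*Real.pi^2 * (r*((1+r^2)*(2*η*(2+r*η)) + 2*r*(2*(1+r*η)))
            + (2+4*r^2)*(2*(1+r*η))) * r^4 * (η*r)
        ≤ 16*Real.pi^2 * (44*(η^3*r^9)) := by
      have := mul_le_mul_of_nonneg_left hpoly (by positivity : (0:ℝ) ≤ 16*Real.pi^2)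
      linarith [this]
    have step3 : 16*Real.pi^2 * (44*(η^3*r^9))
        ≤ 800*Real.pi*(4*Real.pi/3*η^3)*(r^3*(1+r^2)^3) := by
      have hpoly2 : (704:ℝ)*(r^9) ≤ (3200/3)*(r^3*(1+r^2)^3) := by
        have h6 : r^6 ≤ (1+r^2)^3 := by
          nlinarith [sq_nonneg r, pow_nonneg hr0.le 2, pow_nonneg hr0.le 4,
            pow_nonneg hr0.le 6]
        have h7 := mul_le_mul_of_nonneg_left h6
          (by positivity : (0:ℝ) ≤ 704*r^3)
        nlinarith [h7, mul_pos (pow_pos hr0 3)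
          (pow_pos (by positivity : (0:ℝ) < 1+r^2) 3)]
      nlinarith [mul_le_mul_of_nonneg_left hpoly2
        (by positivity : (0:ℝ) ≤ Real.pi^2*η^3)]
    have step4 : 800*Real.pi*(4*Real.pi/3*η^3)*(r^3*(1+r^2)^3)
        ≤ 800*Real.pi*((Real.pi*(Real.sinh (2*η)-2*η)) * (r^3*(1+r^2)^3)) := by
      have h2 := mul_le_mul_of_nonneg_left
        (mul_le_mul_of_nonneg_right hμ3 hden.le) (by positivity : (0:ℝ) ≤ 800*Real.pi)
      linarith [h2]
    linarith


lemma hPM_eq {R η s r : ℝ} (hη0 : 0 < η) (hr : r ≠ 0) :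
    hPM R η s r = phi η r * KK (R+s*η) r := by
  have hμ : Real.pi*(Real.sinh (2*η)-2*η) ≠ 0 := (mu_pos hη0).ne'
  have h12 : (1:ℝ)+r^2 ≠ 0 := by positivity
  unfold hPM hSel phi KK
  rw [integral_sin_sinh, integral_sin_sinh]
  field_simp
  ring

end Aux

set_option maxHeartbeats 3000000 in
/-- For `r ≥ 1` one can write `h_±(r) = A(r) e^{ir(R±η)} + B(r) e^{−ir(R±η)}` with
continuously differentiable coefficients. -/
theorem hPM_oscillatory_decomposition :
    ∃ C : ℝ, 0 < C ∧ ∀ R : ℝ, 1 ≤ R → ∀ η : ℝ, 0 < η → η < 1 →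
      ∀ s : ℝ, (s = 1 ∨ s = -1) →
        ∃ A B A' B' : ℝ → ℂ,
          (∀ r : ℝ, 1 ≤ r → HasDerivAt A (A' r) r ∧ HasDerivAt B (B' r) r) ∧
          ContinuousOn A' (Set.Ici 1) ∧ ContinuousOn B' (Set.Ici 1) ∧
          ∀ r : ℝ, 1 ≤ r →
            ((hPM R η s r : ℂ)
                = A r * Complex.exp (Complex.I * r * (R + s * η))
                  + B r * Complex.exp (-(Complex.I * r * (R + s * η)))) ∧
            ‖A r‖ ≤ C * Real.exp R / r ^ 2 * min 1 (1 / (η * r) ^ 2) ∧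
            ‖B r‖ ≤ C * Real.exp R / r ^ 2 * min 1 (1 / (η * r) ^ 2) ∧
            ‖A' r‖ ≤ C * Real.exp R / r ^ 3 * min 1 (1 / (η * r)) ∧
            ‖B' r‖ ≤ C * Real.exp R / r ^ 3 * min 1 (1 / (η * r)) := by
  refine ⟨10000, by norm_num, ?_⟩
  intro R hR η hη0 hη1 s hs
  have hρ0 : 0 < R + s*η := by rcases hs with h|h <;> rw [h] <;> nlinarith
  have hρR : R + s*η ≤ R + 1 := by rcases hs with h|h <;> rw [h] <;> nlinarith
  set ρ := R + s*η with hρdef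
  have hexp : Real.exp ρ ≤ 3*Real.exp R := by
    have h1 : Real.exp ρ ≤ Real.exp R * Real.exp 1 := by
      rw [← Real.exp_add]; exact Real.exp_le_exp.mpr hρR
    nlinarith [Real.exp_one_lt_d9, Real.exp_pos R]
  have hMc : Real.cosh ρ ≤ 3*Real.exp R := by
    have h2 : Real.exp (-ρ) ≤ Real.exp ρ := Real.exp_le_exp.mpr (by linarith)
    have h3 : (0:ℝ) < Real.exp (-ρ) := Real.exp_pos _
    rw [Real.cosh_eq]
    linarith
  have hMs : Real.sinh ρ ≤ 3*Real.exp R := by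
    have h3 : (0:ℝ) < Real.exp (-ρ) := Real.exp_pos _
    rw [Real.sinh_eq]
    nlinarith [Real.exp_pos R]
  have hsh0 : 0 ≤ Real.sinh ρ := Real.sinh_nonneg_iff.mpr hρ0.le
  have hch1 : (1:ℝ) ≤ Real.cosh ρ := Real.one_le_cosh ρ
  have hπ := Real.pi_pos
  have hπ4 : Real.pi < 3.15 := by
    have := Real.pi_lt_d2
    linarith
  refine ⟨fun r => (phi η r : ℂ) * (-(Complex.I * ((Real.cosh ρ/2 : ℝ):ℂ))
            - ((Real.sinh ρ/2 : ℝ):ℂ) * (r:ℂ)),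
      fun r => (phi η r : ℂ) * ((Complex.I * ((Real.cosh ρ/2 : ℝ):ℂ))
            - ((Real.sinh ρ/2 : ℝ):ℂ) * (r:ℂ)),
      fun r => (phi' η r : ℂ) * (-(Complex.I * ((Real.cosh ρ/2 : ℝ):ℂ))
            - ((Real.sinh ρ/2 : ℝ):ℂ) * (r:ℂ))
          + (phi η r : ℂ) * (-((Real.sinh ρ/2 : ℝ):ℂ)),
      fun r => (phi' η r : ℂ) * ((Complex.I * ((Real.cosh ρ/2 : ℝ):ℂ))
            - ((Real.sinh ρ/2 : ℝ):ℂ) * (r:ℂ))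
          + (phi η r : ℂ) * (-((Real.sinh ρ/2 : ℝ):ℂ)),
      ?_, ?_, ?_, ?_⟩
  · -- derivatives
    intro r hr
    have hr0 : (0:ℝ) < r := lt_of_lt_of_le one_pos hr
    have hφ : HasDerivAt (fun r : ℝ => ((phi η r : ℝ) : ℂ)) ((phi' η r : ℝ):ℂ) r :=
      (phi_hasDerivAt hr0.ne').ofReal_comp
    have hid : HasDerivAt (fun r : ℝ => ((r : ℝ) : ℂ)) 1 r := by
      simpa using (hasDerivAt_id r).ofReal_comp
    constructor
    · have hw : HasDerivAt (fun r : ℝ => -(Complex.I * ((Real.cosh ρ/2 : ℝ):ℂ))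
          - ((Real.sinh ρ/2 : ℝ):ℂ) * ((r:ℝ):ℂ)) (-((Real.sinh ρ/2 : ℝ):ℂ)) r := by
        have := (hasDerivAt_const r (-(Complex.I * ((Real.cosh ρ/2 : ℝ):ℂ)))).sub
          (hid.const_mul (((Real.sinh ρ/2 : ℝ):ℂ)))
        exact this.congr_deriv (by ring)
      exact (hφ.mul hw).congr_deriv (by ring)
    · have hw : HasDerivAt (fun r : ℝ => (Complex.I * ((Real.cosh ρ/2 : ℝ):ℂ))
          - ((Real.sinh ρ/2 : ℝ):ℂ) * ((r:ℝ):ℂ)) (-((Real.sinh ρ/2 : ℝ):ℂ)) r := by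
        have := (hasDerivAt_const r ((Complex.I * ((Real.cosh ρ/2 : ℝ):ℂ)))).sub
          (hid.const_mul (((Real.sinh ρ/2 : ℝ):ℂ)))
        exact this.congr_deriv (by ring)
      exact (hφ.mul hw).congr_deriv (by ring)
  · -- continuity of A'
    have hφ'c : ContinuousOn (fun r => phi' η r) (Set.Ici 1) := by
      unfold phi' KK KK'
      apply ContinuousOn.div (by fun_prop) (by fun_prop)
      intro x hx
      have hx1 : (1:ℝ) ≤ x := hx
      have hx0 : (0:ℝ) < x := lt_of_lt_of_le one_pos hx1
      positivity
    have hφc : ContinuousOn (fun r => phi η r) (Set.Ici 1) := by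
      unfold phi KK
      apply ContinuousOn.div (by fun_prop) (by fun_prop)
      intro x hx
      have hx1 : (1:ℝ) ≤ x := hx
      have hx0 : (0:ℝ) < x := lt_of_lt_of_le one_pos hx1
      positivity
    apply ContinuousOn.add
    · exact (Complex.continuous_ofReal.comp_continuousOn hφ'c).mul
        ((continuous_const.sub (continuous_const.mul Complex.continuous_ofReal)).continuousOn)
    · exact (Complex.continuous_ofReal.comp_continuousOn hφc).mul continuousOn_const
  · -- continuity of B'
    have hφ'c : ContinuousOn (fun r => phi' η r) (Set.Ici 1) := by
      unfold phi' KK KK'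
      apply ContinuousOn.div (by fun_prop) (by fun_prop)
      intro x hx
      have hx1 : (1:ℝ) ≤ x := hx
      have hx0 : (0:ℝ) < x := lt_of_lt_of_le one_pos hx1
      positivity
    have hφc : ContinuousOn (fun r => phi η r) (Set.Ici 1) := by
      unfold phi KK
      apply ContinuousOn.div (by fun_prop) (by fun_prop)
      intro x hx
      have hx1 : (1:ℝ) ≤ x := hx
      have hx0 : (0:ℝ) < x := lt_of_lt_of_le one_pos hx1
      positivity
    apply ContinuousOn.add
    · exact (Complex.continuous_ofReal.comp_continuousOn hφ'c).mul
        ((continuous_const.sub (continuous_const.mul Complex.continuous_ofReal)).continuousOn)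
    · exact (Complex.continuous_ofReal.comp_continuousOn hφc).mul continuousOn_const
  · -- pointwise identity and bounds
    intro r hr
    have hr0 : (0:ℝ) < r := lt_of_lt_of_le one_pos hr
    have hφb := phi_bound hη0 hη1.le hr
    have hφ'b := phi'_bound hη0 hη1.le hr
    have hm0 : (0:ℝ) ≤ min 1 (1/(η*r)^2) := le_min (by norm_num) (by positivity)
    have hm0' : (0:ℝ) ≤ min 1 (1/(η*r)) := le_min (by norm_num) (by positivity)
    have hm21 : min 1 (1/(η*r)^2) ≤ min 1 (1/(η*r)) := by
      rcases le_total (η*r) 1 with h | h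
      · have h2 : (1:ℝ) ≤ 1/(η*r) := by
          rw [le_div_iff₀ (by positivity)]; linarith
        rw [min_eq_left h2]
        exact min_le_left _ _
      · have h1 : 1/(η*r)^2 ≤ 1/(η*r) := by
          rw [div_le_div_iff₀ (by positivity) (by positivity)]
          nlinarith
        rw [min_eq_right (show (1:ℝ)/(η*r) ≤ 1 by
          rw [div_le_one (by positivity)]; exact h)]
        exact le_trans (min_le_right _ _) h1
    have hwA : ‖-(Complex.I * ((Real.cosh ρ/2 : ℝ):ℂ)) - ((Real.sinh ρ/2 : ℝ):ℂ) * (r:ℂ)‖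
        ≤ 3*Real.exp R * r := by
      calc ‖-(Complex.I * ((Real.cosh ρ/2 : ℝ):ℂ)) - ((Real.sinh ρ/2 : ℝ):ℂ) * (r:ℂ)‖
          = ‖Complex.I * ((Real.cosh ρ/2 : ℝ):ℂ) + ((Real.sinh ρ/2 : ℝ):ℂ) * (r:ℂ)‖ := by
            rw [show -(Complex.I * ((Real.cosh ρ/2 : ℝ):ℂ)) - ((Real.sinh ρ/2 : ℝ):ℂ) * (r:ℂ)
              = -(Complex.I * ((Real.cosh ρ/2 : ℝ):ℂ) + ((Real.sinh ρ/2 : ℝ):ℂ) * (r:ℂ)) from by ring,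
              norm_neg]
        _ ≤ ‖Complex.I * ((Real.cosh ρ/2 : ℝ):ℂ)‖ + ‖((Real.sinh ρ/2 : ℝ):ℂ) * (r:ℂ)‖ :=
            norm_add_le _ _
        _ = Real.cosh ρ/2 + Real.sinh ρ/2 * r := by
            rw [norm_mul, norm_mul, Complex.norm_I, Complex.norm_real, Complex.norm_real,
              Complex.norm_real, one_mul, Real.norm_eq_abs, Real.norm_eq_abs, Real.norm_eq_abs,
              abs_of_nonneg (by linarith : (0:ℝ) ≤ Real.cosh ρ/2),
              abs_of_nonneg (by linarith : (0:ℝ) ≤ Real.sinh ρ/2),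
              abs_of_nonneg hr0.le]
        _ ≤ 3*Real.exp R * r := by nlinarith [Real.exp_pos R]
    have hwB : ‖(Complex.I * ((Real.cosh ρ/2 : ℝ):ℂ)) - ((Real.sinh ρ/2 : ℝ):ℂ) * (r:ℂ)‖
        ≤ 3*Real.exp R * r := by
      calc ‖(Complex.I * ((Real.cosh ρ/2 : ℝ):ℂ)) - ((Real.sinh ρ/2 : ℝ):ℂ) * (r:ℂ)‖
          ≤ ‖Complex.I * ((Real.cosh ρ/2 : ℝ):ℂ)‖ + ‖((Real.sinh ρ/2 : ℝ):ℂ) * (r:ℂ)‖ :=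
            norm_sub_le _ _
        _ = Real.cosh ρ/2 + Real.sinh ρ/2 * r := by
            rw [norm_mul, norm_mul, Complex.norm_I, Complex.norm_real, Complex.norm_real,
              Complex.norm_real, one_mul, Real.norm_eq_abs, Real.norm_eq_abs, Real.norm_eq_abs,
              abs_of_nonneg (by linarith : (0:ℝ) ≤ Real.cosh ρ/2),
              abs_of_nonneg (by linarith : (0:ℝ) ≤ Real.sinh ρ/2),
              abs_of_nonneg hr0.le]
        _ ≤ 3*Real.exp R * r := by nlinarith [Real.exp_pos R]
    refine ⟨?_, ?_, ?_, ?_, ?_⟩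
    · -- identity
      rw [show hPM R η s r = phi η r * KK ρ r from hPM_eq hη0 hr0.ne']
      rw [show Complex.I * (r:ℂ) * ((R:ℂ) + (s:ℂ)*(η:ℂ)) = ((r*ρ : ℝ):ℂ) * Complex.I from by
        rw [hρdef]; push_cast; ring]
      rw [show -(((r*ρ : ℝ):ℂ) * Complex.I) = ((-(r*ρ) : ℝ):ℂ) * Complex.I from by
        push_cast; ring]
      rw [Complex.exp_mul_I, Complex.exp_mul_I,
        ← Complex.ofReal_cos, ← Complex.ofReal_sin,
        ← Complex.ofReal_cos, ← Complex.ofReal_sin,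
        Real.cos_neg, Real.sin_neg]
      unfold KK
      push_cast
      linear_combination ((phi η r : ℂ) * Complex.cosh ((ρ:ℝ):ℂ)
        * Complex.sin (((r:ℝ):ℂ)*((ρ:ℝ):ℂ))) * Complex.I_sq
    · -- ‖A r‖
      rw [norm_mul, Complex.norm_real, Real.norm_eq_abs]
      calc |phi η r| * ‖-(Complex.I * ((Real.cosh ρ/2 : ℝ):ℂ)) - ((Real.sinh ρ/2 : ℝ):ℂ) * (r:ℂ)‖
          ≤ (48*Real.pi * min 1 (1/(η*r)^2) / r^3) * (3*Real.exp R * r) :=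
            mul_le_mul hφb hwA (norm_nonneg _) (by positivity)
        _ = 144*Real.pi * (Real.exp R * min 1 (1/(η*r)^2) / r^2) := by
            field_simp; ring
        _ ≤ 10000 * (Real.exp R * min 1 (1/(η*r)^2) / r^2) := by
            have h0 : (0:ℝ) ≤ Real.exp R * min 1 (1/(η*r)^2) / r^2 := by positivity
            nlinarith
        _ = 10000 * Real.exp R / r^2 * min 1 (1/(η*r)^2) := by ring
    · -- ‖B r‖
      rw [norm_mul, Complex.norm_real, Real.norm_eq_abs]
      calc |phi η r| * ‖(Complex.I * ((Real.cosh ρ/2 : ℝ):ℂ)) - ((Real.sinh ρ/2 : ℝ):ℂ) * (r:ℂ)‖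
          ≤ (48*Real.pi * min 1 (1/(η*r)^2) / r^3) * (3*Real.exp R * r) :=
            mul_le_mul hφb hwB (norm_nonneg _) (by positivity)
        _ = 144*Real.pi * (Real.exp R * min 1 (1/(η*r)^2) / r^2) := by
            field_simp; ring
        _ ≤ 10000 * (Real.exp R * min 1 (1/(η*r)^2) / r^2) := by
            have h0 : (0:ℝ) ≤ Real.exp R * min 1 (1/(η*r)^2) / r^2 := by positivity
            nlinarith
        _ = 10000 * Real.exp R / r^2 * min 1 (1/(η*r)^2) := by ring
    · -- ‖A' r‖
      calc ‖(phi' η r : ℂ) * (-(Complex.I * ((Real.cosh ρ/2 : ℝ):ℂ))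
              - ((Real.sinh ρ/2 : ℝ):ℂ) * (r:ℂ)) + (phi η r : ℂ) * (-((Real.sinh ρ/2 : ℝ):ℂ))‖
          ≤ ‖(phi' η r : ℂ)‖ * ‖-(Complex.I * ((Real.cosh ρ/2 : ℝ):ℂ))
              - ((Real.sinh ρ/2 : ℝ):ℂ) * (r:ℂ)‖ + ‖(phi η r : ℂ)‖ * ‖(-((Real.sinh ρ/2 : ℝ):ℂ))‖ := by
            refine le_trans (norm_add_le _ _) ?_
            rw [norm_mul, norm_mul]
        _ ≤ (800*Real.pi * min 1 (1/(η*r)) / r^4) * (3*Real.exp R * r)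
              + (48*Real.pi * min 1 (1/(η*r)^2) / r^3) * (3*Real.exp R/2) := by
            refine add_le_add (mul_le_mul (by rwa [Complex.norm_real, Real.norm_eq_abs])
              hwA (norm_nonneg _) (by positivity)) (mul_le_mul
                (by rwa [Complex.norm_real, Real.norm_eq_abs])
                (by rw [norm_neg, Complex.norm_real, Real.norm_eq_abs,
                    abs_of_nonneg (by linarith : (0:ℝ) ≤ Real.sinh ρ/2)]; linarith)
                (norm_nonneg _) (by positivity))
        _ ≤ (2400*Real.pi + 72*Real.pi) * (Real.exp R * min 1 (1/(η*r)) / r^3) := by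
            have e1 : (800*Real.pi * min 1 (1/(η*r)) / r^4) * (3*Real.exp R * r)
                = 2400*Real.pi * (Real.exp R * min 1 (1/(η*r)) / r^3) := by
              field_simp; ring
            have e2 : (48*Real.pi * min 1 (1/(η*r)^2) / r^3) * (3*Real.exp R/2)
                ≤ 72*Real.pi * (Real.exp R * min 1 (1/(η*r)) / r^3) := by
              have := mul_le_mul_of_nonneg_left hm21
                (by positivity : (0:ℝ) ≤ 72*Real.pi*Real.exp R/r^3)
              calc (48*Real.pi * min 1 (1/(η*r)^2) / r^3) * (3*Real.exp R/2)
                  = (72*Real.pi*Real.exp R/r^3) * min 1 (1/(η*r)^2) := by ring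
                _ ≤ (72*Real.pi*Real.exp R/r^3) * min 1 (1/(η*r)) := this
                _ = 72*Real.pi * (Real.exp R * min 1 (1/(η*r)) / r^3) := by ring
            linarith [e1.le, e2]
        _ ≤ 10000 * Real.exp R / r^3 * min 1 (1/(η*r)) := by
            have h0 : (0:ℝ) ≤ Real.exp R * min 1 (1/(η*r)) / r^3 := by positivity
            have : 10000 * Real.exp R / r^3 * min 1 (1/(η*r))
                = 10000 * (Real.exp R * min 1 (1/(η*r)) / r^3) := by ring
            rw [this]
            nlinarith
    · -- ‖B' r‖
      calc ‖(phi' η r : ℂ) * ((Complex.I * ((Real.cosh ρ/2 : ℝ):ℂ))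
              - ((Real.sinh ρ/2 : ℝ):ℂ) * (r:ℂ)) + (phi η r : ℂ) * (-((Real.sinh ρ/2 : ℝ):ℂ))‖
          ≤ ‖(phi' η r : ℂ)‖ * ‖(Complex.I * ((Real.cosh ρ/2 : ℝ):ℂ))
              - ((Real.sinh ρ/2 : ℝ):ℂ) * (r:ℂ)‖ + ‖(phi η r : ℂ)‖ * ‖(-((Real.sinh ρ/2 : ℝ):ℂ))‖ := by
            refine le_trans (norm_add_le _ _) ?_
            rw [norm_mul, norm_mul]
        _ ≤ (800*Real.pi * min 1 (1/(η*r)) / r^4) * (3*Real.exp R * r)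
              + (48*Real.pi * min 1 (1/(η*r)^2) / r^3) * (3*Real.exp R/2) := by
            refine add_le_add (mul_le_mul (by rwa [Complex.norm_real, Real.norm_eq_abs])
              hwB (norm_nonneg _) (by positivity)) (mul_le_mul
                (by rwa [Complex.norm_real, Real.norm_eq_abs])
                (by rw [norm_neg, Complex.norm_real, Real.norm_eq_abs,
                    abs_of_nonneg (by linarith : (0:ℝ) ≤ Real.sinh ρ/2)]; linarith)
                (norm_nonneg _) (by positivity))
        _ ≤ (2400*Real.pi + 72*Real.pi) * (Real.exp R * min 1 (1/(η*r)) / r^3) := by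
            have e1 : (800*Real.pi * min 1 (1/(η*r)) / r^4) * (3*Real.exp R * r)
                = 2400*Real.pi * (Real.exp R * min 1 (1/(η*r)) / r^3) := by
              field_simp; ring
            have e2 : (48*Real.pi * min 1 (1/(η*r)^2) / r^3) * (3*Real.exp R/2)
                ≤ 72*Real.pi * (Real.exp R * min 1 (1/(η*r)) / r^3) := by
              have := mul_le_mul_of_nonneg_left hm21
                (by positivity : (0:ℝ) ≤ 72*Real.pi*Real.exp R/r^3)
              calc (48*Real.pi * min 1 (1/(η*r)^2) / r^3) * (3*Real.exp R/2)
                  = (72*Real.pi*Real.exp R/r^3) * min 1 (1/(η*r)^2) := by ring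
                _ ≤ (72*Real.pi*Real.exp R/r^3) * min 1 (1/(η*r)) := this
                _ = 72*Real.pi * (Real.exp R * min 1 (1/(η*r)) / r^3) := by ring
            linarith [e1.le, e2]
        _ ≤ 10000 * Real.exp R / r^3 * min 1 (1/(η*r)) := by
            have h0 : (0:ℝ) ≤ Real.exp R * min 1 (1/(η*r)) / r^3 := by positivity
            have : 10000 * Real.exp R / r^3 * min 1 (1/(η*r))
                = 10000 * (Real.exp R * min 1 (1/(η*r)) / r^3) := by ring
            rw [this]
            nlinarith
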